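/- Suppose x follows the disturbed planar circular-field dynamics, and there exist constants 0 < dxmin ≤ dxmax with dxmin ≤ ‖ẋ(t)‖ ≤ dxmax for all t ≥ 0. Assume R(0) < 0, S(0) < 0, and that the disturbance bound satisfies zmax ≤ min( kcf·dxmin²/(‖x(0)‖·dxmax²), dxmin²/(2·‖x(0)‖), −dxmin·S(0)/(4·‖x(0)‖²) ). Then there exists τ > 0 such that R(τ) = 0 and for all t ∈ [0, τ]: ‖x(t)‖ ≥ −S(0)/(2·dxmax) (equivalently, the barrier V_B(t) = 1/‖x(t)‖² satisfies V_B(t) ≤ 4·dxmax²/S(0)²). -/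

import Mathlib

open scoped RealInnerProductSpace
set_option maxHeartbeats 1000000

/-- The cross product on `ℝ³`. -/
noncomputable def cross (a b : EuclideanSpace ℝ (Fin 3)) : EuclideanSpace ℝ (Fin 3) :=
  (EuclideanSpace.equiv (Fin 3) ℝ).symm
    ![a 1 * b 2 - a 2 * b 1, a 2 * b 0 - a 0 * b 2, a 0 * b 1 - a 1 * b 0]

lemma cross_c0 (u w : EuclideanSpace ℝ (Fin 3)) : cross u w 0 = u 1 * w 2 - u 2 * w 1 := rfl
lemma cross_c1 (u w : EuclideanSpace ℝ (Fin 3)) : cross u w 1 = u 2 * w 0 - u 0 * w 2 := rfl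
lemma cross_c2 (u w : EuclideanSpace ℝ (Fin 3)) : cross u w 2 = u 0 * w 1 - u 1 * w 0 := rfl

lemma inner3 (u w : EuclideanSpace ℝ (Fin 3)) : ⟪u,w⟫ = u 0 * w 0 + u 1 * w 1 + u 2 * w 2 := by
  simp [PiLp.inner_apply, Fin.sum_univ_three, RCLike.inner_apply, mul_comm]

lemma cross_cyclic (u w c : EuclideanSpace ℝ (Fin 3)) : ⟪u, cross w c⟫ = ⟪cross u w, c⟫ := by
  simp only [inner3, cross_c0, cross_c1, cross_c2]; ring

lemma cross_triple (u w c : EuclideanSpace ℝ (Fin 3)) :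
    ⟪cross u (cross w c), c⟫ = ⟪c, u⟫ * ⟪c, w⟫ - ⟪u, w⟫ * ⟪c, c⟫ := by
  simp only [inner3, cross_c0, cross_c1, cross_c2]; ring

lemma cross_lagrange (u w : EuclideanSpace ℝ (Fin 3)) :
    ⟪cross u w, cross u w⟫ = ⟪u, u⟫ * ⟪w, w⟫ - ⟪u, w⟫ ^ 2 := by
  simp only [inner3, cross_c0, cross_c1, cross_c2]; ring

lemma cross_norm_le (u w : EuclideanSpace ℝ (Fin 3)) : ‖cross u w‖ ≤ ‖u‖ * ‖w‖ := by
  have h := cross_lagrange u w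
  rw [real_inner_self_eq_norm_sq, real_inner_self_eq_norm_sq, real_inner_self_eq_norm_sq] at h
  nlinarith [norm_nonneg (cross u w), norm_nonneg u, norm_nonneg w, sq_nonneg (⟪u,w⟫),
    mul_nonneg (norm_nonneg u) (norm_nonneg w)]

lemma cross_smul_add_right (u w c d : EuclideanSpace ℝ (Fin 3)) (r : ℝ) :
    ⟪cross u (r • w + d), c⟫ = r * ⟪cross u w, c⟫ + ⟪cross u d, c⟫ := by
  simp only [inner3, cross_c0, cross_c1, cross_c2, PiLp.add_apply, PiLp.smul_apply,
    smul_eq_mul]; ring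

lemma hasDerivAt_S_aux {x v a : ℝ → EuclideanSpace ℝ (Fin 3)} (b : EuclideanSpace ℝ (Fin 3))
    {t : ℝ} (hx : HasDerivAt x (v t) t) (hv : HasDerivAt v (a t) t) :
    HasDerivAt (fun s => ⟪cross (x s) (v s), b⟫) (⟪cross (x t) (a t), b⟫) t := by
  have hxi : ∀ i, HasDerivAt (fun s => x s i) (v t i) t :=
    fun i => by exact (EuclideanSpace.proj i).hasFDerivAt.comp_hasDerivAt t hx
  have hvi : ∀ i, HasDerivAt (fun s => v s i) (a t i) t :=
    fun i => by exact (EuclideanSpace.proj i).hasFDerivAt.comp_hasDerivAt t hv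
  have H := ((((hxi 1).mul (hvi 2)).sub ((hxi 2).mul (hvi 1))).mul_const (b 0)).add
    (((((hxi 2).mul (hvi 0)).sub ((hxi 0).mul (hvi 2))).mul_const (b 1)).add
      ((((hxi 0).mul (hvi 1)).sub ((hxi 1).mul (hvi 0))).mul_const (b 2)))
  have heq : (fun s => ⟪cross (x s) (v s), b⟫) = fun s =>
      (x s 1 * v s 2 - x s 2 * v s 1) * b 0 + ((x s 2 * v s 0 - x s 0 * v s 2) * b 1 +
        (x s 0 * v s 1 - x s 1 * v s 0) * b 2) := by
    funext s; simp only [inner3, cross_c0, cross_c1, cross_c2]; ring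
  rw [heq]
  refine H.congr_deriv ?_
  simp only [inner3, cross_c0, cross_c1, cross_c2]; ring


private lemma mono_aux {f f' : ℝ → ℝ} {s₁ s₂ : ℝ} (hle : s₁ ≤ s₂)
    (hf : ∀ t ∈ Set.Icc s₁ s₂, HasDerivAt f (f' t) t)
    (hf' : ∀ t ∈ Set.Ioo s₁ s₂, f' t ≤ 0) : f s₂ ≤ f s₁ := by
  have hA : AntitoneOn f (Set.Icc s₁ s₂) := by
    apply antitoneOn_of_deriv_nonpos (convex_Icc _ _)
    · exact fun t ht => (hf t ht).continuousAt.continuousWithinAt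
    · intro t ht
      rw [interior_Icc] at ht
      exact ((hf t ⟨ht.1.le, ht.2.le⟩).differentiableAt).differentiableWithinAt
    · intro t ht
      rw [interior_Icc] at ht
      rw [(hf t ⟨ht.1.le, ht.2.le⟩).deriv]
      exact hf' t ht
  exact hA ⟨le_refl _, hle⟩ ⟨hle, le_refl _⟩ hle

private lemma aux_main {R S Q Rd Sd : ℝ → ℝ} {ρ M hcr : ℝ}
    (hρ : 0 < ρ) (hM : 0 ≤ M) (hMρ : M ≤ ρ) (hhcr : 0 < hcr)
    (hR' : ∀ t, 0 ≤ t → HasDerivAt R (Rd t) t)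
    (hS' : ∀ t, 0 ≤ t → HasDerivAt S (Sd t) t)
    (hQ' : ∀ t, 0 ≤ t → HasDerivAt Q (2 * R t) t)
    (hRd_lb : ∀ t, 0 ≤ t → R t < 0 → S t ≤ 0 → Q t ≤ Q 0 → ρ ≤ Rd t)
    (hSd_ub : ∀ t, 0 ≤ t → Q t ≤ Q 0 → Sd t ≤ M)
    (hSd_np : ∀ t, 0 ≤ t → Q t ≤ Q 0 → R t ≤ -hcr → Sd t ≤ 0)
    (hR0 : R 0 < 0) (hS0 : S 0 < 0)
    (hMh : M * hcr ≤ ρ * (-(S 0) / 2)) :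
    ∃ τ : ℝ, 0 < τ ∧ R τ = 0 ∧ ∀ t ∈ Set.Icc (0:ℝ) τ, S t ≤ S 0 / 2 := by
  have hS0half : S 0 / 2 < 0 := by linarith
  have Qle : ∀ T', 0 ≤ T' → (∀ s ∈ Set.Icc (0:ℝ) T', R s < 0) →
      ∀ s ∈ Set.Icc (0:ℝ) T', Q s ≤ Q 0 := by
    intro T' hT' hRneg s hs
    refine mono_aux hs.1 (fun u hu => hQ' u hu.1) ?_
    intro u hu
    have : R u < 0 := hRneg u ⟨hu.1.le, hu.2.le.trans hs.2⟩
    linarith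
  have hRcont : ∀ c : ℝ, ContinuousOn R (Set.Icc 0 c) :=
    fun c t ht => ((hR' t ht.1).continuousAt).continuousWithinAt
  have hScont : ∀ c : ℝ, ContinuousOn S (Set.Icc 0 c) :=
    fun c t ht => ((hS' t ht.1).continuousAt).continuousWithinAt
  have Sle : ∀ T', 0 ≤ T' → (∀ s ∈ Set.Icc (0:ℝ) T', R s < 0) →
      ∀ s ∈ Set.Icc (0:ℝ) T', S s ≤ S 0 / 2 := by
    intro T' hT' hRneg
    by_contra hcon
    push_neg at hcon
    obtain ⟨t₂, ht₂mem, ht₂⟩ := hcon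
    have hQle := Qle T' hT' hRneg
    set E : Set ℝ := Set.Icc 0 T' ∩ S ⁻¹' Set.Ici (S 0 / 2) with hEdef
    have hEclosed : IsClosed E :=
      (hScont T').preimage_isClosed_of_isClosed isClosed_Icc isClosed_Ici
    have hEne : E.Nonempty := ⟨t₂, ht₂mem, ht₂.le⟩
    have hEbdd : BddBelow E := ⟨0, fun y hy => hy.1.1⟩
    set tst := sInf E with htstdef
    have htstmem : tst ∈ E := hEclosed.csInf_mem hEne hEbdd
    have htstIcc : tst ∈ Set.Icc (0:ℝ) T' := htstmem.1
    have htstS : S 0 / 2 ≤ S tst := htstmem.2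
    have hlt : ∀ s, 0 ≤ s → s < tst → S s < S 0 / 2 := by
      intro s hs0 hst
      by_contra hc
      push_neg at hc
      exact absurd (csInf_le hEbdd ⟨⟨hs0, hst.le.trans htstIcc.2⟩, hc⟩) (not_le.mpr hst)
    have htstpos : 0 < tst := by
      rcases htstIcc.1.lt_or_eq with h | h
      · exact h
      · exfalso; rw [← h] at htstS; linarith
    have hRd : ∀ u ∈ Set.Ioo (0:ℝ) tst, ρ ≤ Rd u := by
      intro u hu
      have hu0 : (0:ℝ) ≤ u := hu.1.le
      have huI : u ∈ Set.Icc (0:ℝ) T' := ⟨hu0, hu.2.le.trans htstIcc.2⟩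
      exact hRd_lb u hu0 (hRneg u huI) (by have := hlt u hu0 hu.2; linarith) (hQle u huI)
    have hmono : ∀ s₁ s₂, 0 ≤ s₁ → s₁ ≤ s₂ → s₂ ≤ tst → R s₁ + ρ * (s₂ - s₁) ≤ R s₂ := by
      intro s₁ s₂ h1 h12 h2
      have := mono_aux (f := fun u => ρ * u - R u) (f' := fun u => ρ * 1 - Rd u) h12
        (fun u hu => (((hasDerivAt_id u).const_mul ρ).sub (hR' u (h1.trans hu.1))))
        (fun u hu => by
          show ρ * 1 - Rd u ≤ 0
          have := hRd u ⟨lt_of_le_of_lt h1 hu.1, lt_of_lt_of_le hu.2 h2⟩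
          linarith)
      linarith
    have hfinal : S tst < S 0 / 2 := by
      rcases le_or_gt (R tst) (-hcr) with hcase | hcase
      · have hSd0 : ∀ u ∈ Set.Ioo (0:ℝ) tst, Sd u ≤ 0 := by
          intro u hu
          have huI : u ∈ Set.Icc (0:ℝ) T' := ⟨hu.1.le, hu.2.le.trans htstIcc.2⟩
          have hRu : R u ≤ -hcr := by
            have := hmono u tst hu.1.le hu.2.le le_rfl
            nlinarith [mul_nonneg hρ.le (sub_nonneg.mpr hu.2.le)]
          exact hSd_np u hu.1.le (hQle u huI) hRu
        have := mono_aux (f := S) (f' := Sd) htstpos.le (fun u hu => hS' u hu.1) hSd0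
        linarith
      · set F : Set ℝ := Set.Icc 0 tst ∩ R ⁻¹' Set.Ici (-hcr) with hFdef
        have hFclosed : IsClosed F :=
          (hRcont tst).preimage_isClosed_of_isClosed isClosed_Icc isClosed_Ici
        have hFne : F.Nonempty := ⟨tst, ⟨htstpos.le, le_rfl⟩, hcase.le⟩
        have hFbdd : BddBelow F := ⟨0, fun y hy => hy.1.1⟩
        set t₁ := sInf F with ht₁def
        have ht₁mem : t₁ ∈ F := hFclosed.csInf_mem hFne hFbdd
        have ht₁0 : 0 ≤ t₁ := ht₁mem.1.1
        have ht₁tst : t₁ ≤ tst := ht₁mem.1.2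
        have ht₁R : -hcr ≤ R t₁ := ht₁mem.2
        have hbefore : ∀ s, 0 ≤ s → s < t₁ → R s < -hcr := by
          intro s hs0 hst
          by_contra hc
          push_neg at hc
          exact absurd (csInf_le hFbdd ⟨⟨hs0, hst.le.trans ht₁tst⟩, hc⟩) (not_le.mpr hst)
        have hSt₁ : S t₁ ≤ S 0 := by
          rcases ht₁0.lt_or_eq with h | h
          · refine mono_aux (f := S) (f' := Sd) ht₁0 (fun u hu => hS' u hu.1) ?_
            intro u hu
            have huI : u ∈ Set.Icc (0:ℝ) T' :=
              ⟨hu.1.le, ((hu.2.le.trans ht₁tst).trans htstIcc.2)⟩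
            exact hSd_np u hu.1.le (hQle u huI) (hbefore u hu.1.le hu.2).le
          · rw [← h]
        have hg := mono_aux (f := fun u => S u - M / ρ * (R u + hcr))
          (f' := fun u => Sd u - M / ρ * Rd u) ht₁tst
          (fun u hu => ((hS' u (ht₁0.trans hu.1)).sub
            (((hR' u (ht₁0.trans hu.1)).add_const hcr).const_mul (M / ρ))))
          (fun u hu => by
            have hu' : u ∈ Set.Ioo (0:ℝ) tst := ⟨lt_of_le_of_lt ht₁0 hu.1, hu.2⟩
            have h1 := hRd u hu'
            have huI : u ∈ Set.Icc (0:ℝ) T' := ⟨hu'.1.le, hu'.2.le.trans htstIcc.2⟩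
            have h2 := hSd_ub u hu'.1.le (hQle u huI)
            have h3 : M / ρ * ρ ≤ M / ρ * Rd u :=
              mul_le_mul_of_nonneg_left h1 (div_nonneg hM hρ.le)
            rw [div_mul_cancel₀ _ hρ.ne'] at h3
            linarith)
        have hMρnn : 0 ≤ M / ρ := div_nonneg hM hρ.le
        have ht₁h : 0 ≤ M / ρ * (R t₁ + hcr) := mul_nonneg hMρnn (by linarith)
        have hStst : S tst ≤ S 0 + M / ρ * (R tst + hcr) := by linarith
        have hRtstneg : R tst < 0 := hRneg tst htstIcc
        rcases hM.lt_or_eq with hMpos | hM0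
        · have h5 : M / ρ * (R tst + hcr) < M / ρ * hcr :=
            mul_lt_mul_of_pos_left (by linarith) (div_pos hMpos hρ)
          have h6 : M / ρ * hcr ≤ -(S 0) / 2 := by
            rw [div_mul_eq_mul_div, div_le_div_iff₀ hρ (by norm_num : (0:ℝ) < 2)]
            nlinarith
          linarith
        · rw [← hM0] at hStst
          simp only [zero_div, zero_mul, add_zero] at hStst
          linarith
    linarith
  have growth : ∀ T', 0 ≤ T' → (∀ s ∈ Set.Icc (0:ℝ) T', R s < 0) →
      R 0 + ρ * T' ≤ R T' := by
    intro T' hT' hRneg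
    have hQle := Qle T' hT' hRneg
    have hSle := Sle T' hT' hRneg
    have := mono_aux (f := fun u => ρ * u - R u) (f' := fun u => ρ * 1 - Rd u) hT'
      (fun u hu => (((hasDerivAt_id u).const_mul ρ).sub (hR' u hu.1)))
      (fun u hu => by
        show ρ * 1 - Rd u ≤ 0
        have huI : u ∈ Set.Icc (0:ℝ) T' := ⟨hu.1.le, hu.2.le⟩
        have := hRd_lb u hu.1.le (hRneg u huI)
          (by have := hSle u huI; linarith) (hQle u huI)
        linarith)
    linarith
  set T : ℝ := -(R 0) / ρ + 1 with hTdef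
  have hTpos : 0 < T := by
    rw [hTdef]
    have : 0 < -(R 0) / ρ := div_pos (by linarith) hρ
    linarith
  have hex : ∃ t₀ ∈ Set.Icc (0:ℝ) T, 0 ≤ R t₀ := by
    by_contra hc
    push_neg at hc
    have hgr := growth T hTpos.le (fun s hs => hc s hs)
    have hT : ρ * T = -(R 0) + ρ := by
      rw [hTdef]; field_simp
    have hRT := hc T ⟨hTpos.le, le_rfl⟩
    rw [hT] at hgr
    linarith
  obtain ⟨t₀, ht₀mem, ht₀⟩ := hex
  have h0t₀ : (0:ℝ) ≤ t₀ := ht₀mem.1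
  obtain ⟨τ', hτ'mem, hτ'eq⟩ := intermediate_value_Icc h0t₀ (hRcont t₀) ⟨hR0.le, ht₀⟩
  set Z : Set ℝ := Set.Icc 0 t₀ ∩ R ⁻¹' {0} with hZdef
  have hZclosed : IsClosed Z :=
    (hRcont t₀).preimage_isClosed_of_isClosed isClosed_Icc isClosed_singleton
  have hZne : Z.Nonempty := ⟨τ', hτ'mem, hτ'eq⟩
  have hZbdd : BddBelow Z := ⟨0, fun y hy => hy.1.1⟩
  set τ := sInf Z with hτdef
  have hτmem : τ ∈ Z := hZclosed.csInf_mem hZne hZbdd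
  have hτ0 : 0 ≤ τ := hτmem.1.1
  have hτR : R τ = 0 := hτmem.2
  have hτpos : 0 < τ := by
    rcases hτ0.lt_or_eq with h | h
    · exact h
    · exfalso; rw [← h] at hτR; linarith
  have hRneg : ∀ s, 0 ≤ s → s < τ → R s < 0 := by
    intro s hs0 hsτ
    by_contra hc
    push_neg at hc
    obtain ⟨σ, hσmem, hσeq⟩ := intermediate_value_Icc hs0 (hRcont s) ⟨hR0.le, hc⟩
    have hτσ : τ ≤ σ := csInf_le hZbdd
      ⟨⟨hσmem.1, hσmem.2.trans (hsτ.le.trans hτmem.1.2)⟩, hσeq⟩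
    exact absurd hτσ (not_le.mpr (lt_of_le_of_lt hσmem.2 hsτ))
  refine ⟨τ, hτpos, hτR, ?_⟩
  intro t ht
  rcases ht.2.lt_or_eq with h | h
  · exact Sle t ht.1 (fun s hs => hRneg s hs.1 (lt_of_le_of_lt hs.2 h)) t ⟨ht.1, le_rfl⟩
  · rw [h]
    haveI hne : (nhdsWithin τ (Set.Ico (0:ℝ) τ)).NeBot := by
      rw [nhdsWithin_Ico_eq_nhdsLT hτpos]
      infer_instance
    have htend : Filter.Tendsto S (nhdsWithin τ (Set.Ico (0:ℝ) τ)) (nhds (S τ)) :=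
      ((hS' τ hτ0).continuousAt).continuousWithinAt
    refine le_of_tendsto htend ?_
    filter_upwards [self_mem_nhdsWithin] with s hs
    exact Sle s hs.1 (fun u hu => hRneg u hu.1 (lt_of_le_of_lt hu.2 hs.2)) s ⟨hs.1, le_rfl⟩

/-- Lemma 6 of the paper: under the disturbed planar circular-field
dynamics with speed bounds `dxmin ≤ ‖ẋ(t)‖ ≤ dxmax`, if `R(0) < 0`, `S(0) < 0` and the
disturbance bound satisfies
`zmax ≤ min(kcf·dxmin²/(‖x(0)‖·dxmax²), dxmin²/(2‖x(0)‖), −dxmin·S(0)/(4‖x(0)‖²))`,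
then there is `τ > 0` with `R(τ) = 0` and `‖x(t)‖ ≥ −S(0)/(2·dxmax)` on `[0, τ]`
(equivalently `V_B(t) ≤ 4·dxmax²/S(0)²`). -/
theorem cf_disturbed_S_neg
    (kcf zmax dxmin dxmax : ℝ) (hkcf : 0 < kcf) (hzmax : 0 ≤ zmax)
    (hdxmin : 0 < dxmin) (hdx : dxmin ≤ dxmax)
    (b : EuclideanSpace ℝ (Fin 3)) (hb : ‖b‖ = 1)
    (x v a z : ℝ → EuclideanSpace ℝ (Fin 3))
    (hx : ∀ t, 0 ≤ t → HasDerivAt x (v t) t)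
    (hv : ∀ t, 0 ≤ t → HasDerivAt v (a t) t)
    (hxne : ∀ t, 0 ≤ t → x t ≠ 0)
    (hvne : ∀ t, 0 ≤ t → v t ≠ 0)
    (hbx : ∀ t, 0 ≤ t → ⟪b, x t⟫ = 0)
    (hbv : ∀ t, 0 ≤ t → ⟪b, v t⟫ = 0)
    (hbz : ∀ t, 0 ≤ t → ⟪b, z t⟫ = 0)
    (hz : ∀ t, 0 ≤ t → ‖z t‖ ≤ zmax)
    (hacc : ∀ t, 0 ≤ t →
      a t = (kcf / (‖x t‖ ^ 2 * ‖v t‖ ^ 2) * ⟪v t, x t⟫) • cross (v t) b + z t)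
    (hvmin : ∀ t, 0 ≤ t → dxmin ≤ ‖v t‖)
    (hvmax : ∀ t, 0 ≤ t → ‖v t‖ ≤ dxmax)
    (hR0 : ⟪x 0, v 0⟫ < 0)
    (hS0 : ⟪cross (x 0) (v 0), b⟫ < 0)
    (hzbound : zmax ≤ min (kcf * dxmin ^ 2 / (‖x 0‖ * dxmax ^ 2))
      (min (dxmin ^ 2 / (2 * ‖x 0‖))
        (-(dxmin * ⟪cross (x 0) (v 0), b⟫) / (4 * ‖x 0‖ ^ 2)))) :
    ∃ τ : ℝ, 0 < τ ∧ ⟪x τ, v τ⟫ = 0 ∧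
      ∀ t ∈ Set.Icc (0 : ℝ) τ, -⟪cross (x 0) (v 0), b⟫ / (2 * dxmax) ≤ ‖x t‖ := by
  have hX0 : 0 < ‖x 0‖ := norm_pos_iff.mpr (hxne 0 le_rfl)
  have hdmax : 0 < dxmax := lt_of_lt_of_le hdxmin hdx
  have hbb : ⟪b, b⟫ = (1:ℝ) := by
    rw [real_inner_self_eq_norm_sq, hb]; norm_num
  have hzb1 : zmax ≤ kcf * dxmin ^ 2 / (‖x 0‖ * dxmax ^ 2) := hzbound.trans (min_le_left _ _)
  have hzb2 : zmax ≤ dxmin ^ 2 / (2 * ‖x 0‖) :=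
    hzbound.trans ((min_le_right _ _).trans (min_le_left _ _))
  have hzb3 : zmax ≤ -(dxmin * ⟪cross (x 0) (v 0), b⟫) / (4 * ‖x 0‖ ^ 2) :=
    hzbound.trans ((min_le_right _ _).trans (min_le_right _ _))
  have hzb1' : zmax * (‖x 0‖ * dxmax ^ 2) ≤ kcf * dxmin ^ 2 := by
    rw [← le_div_iff₀ (by positivity)]; exact hzb1
  have hzb2' : zmax * (2 * ‖x 0‖) ≤ dxmin ^ 2 := by
    rw [← le_div_iff₀ (by positivity)]; exact hzb2
  have hzb3' : zmax * (4 * ‖x 0‖ ^ 2) ≤ -(dxmin * ⟪cross (x 0) (v 0), b⟫) := by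
    rw [← le_div_iff₀ (by positivity)]; exact hzb3
  have hρ : 0 < dxmin ^ 2 / 2 := by positivity
  have hM : 0 ≤ ‖x 0‖ * zmax := mul_nonneg (norm_nonneg _) hzmax
  have hMρ : ‖x 0‖ * zmax ≤ dxmin ^ 2 / 2 := by linarith
  have hhcr : 0 < dxmin * ‖x 0‖ := by positivity
  -- auxiliary: from Q t ≤ Q 0 deduce the norm bound
  have hxle : ∀ t, ⟪x t, x t⟫ ≤ ⟪x 0, x 0⟫ → ‖x t‖ ≤ ‖x 0‖ := by
    intro t hQ
    rw [real_inner_self_eq_norm_sq, real_inner_self_eq_norm_sq] at hQ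
    nlinarith [norm_nonneg (x t), norm_nonneg (x 0)]
  have hEbound : ∀ t, 0 ≤ t → ‖x t‖ ≤ ‖x 0‖ → ⟪cross (x t) (z t), b⟫ ≤ ‖x 0‖ * zmax := by
    intro t ht hxn
    have ha := abs_real_inner_le_norm (cross (x t) (z t)) b
    rw [hb, mul_one] at ha
    have hc : ‖cross (x t) (z t)‖ ≤ ‖x t‖ * ‖z t‖ := cross_norm_le _ _
    have hd : ‖x t‖ * ‖z t‖ ≤ ‖x 0‖ * zmax :=
      mul_le_mul hxn (hz t ht) (norm_nonneg _) (norm_nonneg _)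
    have := (abs_le.mp ha).2
    linarith
  have hR' : ∀ t, 0 ≤ t → HasDerivAt (fun s => ⟪x s, v s⟫)
      (‖v t‖ ^ 2 + kcf / (‖x t‖ ^ 2 * ‖v t‖ ^ 2) * ⟪x t, v t⟫ * ⟪cross (x t) (v t), b⟫
        + ⟪x t, z t⟫) t := by
    intro t ht
    have H := HasDerivAt.inner ℝ (hx t ht) (hv t ht)
    refine H.congr_deriv ?_
    rw [hacc t ht, inner_add_right, real_inner_smul_right, cross_cyclic,
      real_inner_self_eq_norm_sq, real_inner_comm (v t) (x t)]
    ring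
  have hS' : ∀ t, 0 ≤ t → HasDerivAt (fun s => ⟪cross (x s) (v s), b⟫)
      (-(kcf / (‖x t‖ ^ 2 * ‖v t‖ ^ 2) * ⟪x t, v t⟫ * ⟪x t, v t⟫)
        + ⟪cross (x t) (z t), b⟫) t := by
    intro t ht
    have H := hasDerivAt_S_aux b (hx t ht) (hv t ht)
    convert H using 1
    rw [hacc t ht, cross_smul_add_right, cross_triple, hbx t ht, hbb,
      real_inner_comm (v t) (x t)]
    ring
  have hQ' : ∀ t, 0 ≤ t → HasDerivAt (fun s => ⟪x s, x s⟫) (2 * ⟪x t, v t⟫) t := by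
    intro t ht
    have H := HasDerivAt.inner ℝ (hx t ht) (hx t ht)
    refine H.congr_deriv ?_
    rw [real_inner_comm (v t) (x t)]
    ring
  have hRd_lb : ∀ t, 0 ≤ t → ⟪x t, v t⟫ < 0 → ⟪cross (x t) (v t), b⟫ ≤ 0 →
      ⟪x t, x t⟫ ≤ ⟪x 0, x 0⟫ →
      dxmin ^ 2 / 2 ≤ ‖v t‖ ^ 2 + kcf / (‖x t‖ ^ 2 * ‖v t‖ ^ 2) * ⟪x t, v t⟫ *
        ⟪cross (x t) (v t), b⟫ + ⟪x t, z t⟫ := by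
    intro t ht hRt hSt hQ
    have hxn := hxle t hQ
    have hv2 : dxmin ^ 2 ≤ ‖v t‖ ^ 2 := by nlinarith [hvmin t ht, hdxmin.le]
    have hcnn : 0 ≤ kcf / (‖x t‖ ^ 2 * ‖v t‖ ^ 2) := by positivity
    have hmid : 0 ≤ kcf / (‖x t‖ ^ 2 * ‖v t‖ ^ 2) * ⟪x t, v t⟫ * ⟪cross (x t) (v t), b⟫ := by
      rw [mul_assoc]
      refine mul_nonneg hcnn ?_
      nlinarith [hRt.le, hSt]
    have hinner : -(‖x 0‖ * zmax) ≤ ⟪x t, z t⟫ := by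
      have h1 := abs_real_inner_le_norm (x t) (z t)
      have h2 : ‖x t‖ * ‖z t‖ ≤ ‖x 0‖ * zmax :=
        mul_le_mul hxn (hz t ht) (norm_nonneg _) (norm_nonneg _)
      have := (abs_le.mp h1).1
      linarith
    linarith
  have hSd_ub : ∀ t, 0 ≤ t → ⟪x t, x t⟫ ≤ ⟪x 0, x 0⟫ →
      -(kcf / (‖x t‖ ^ 2 * ‖v t‖ ^ 2) * ⟪x t, v t⟫ * ⟪x t, v t⟫)
        + ⟪cross (x t) (z t), b⟫ ≤ ‖x 0‖ * zmax := by
    intro t ht hQ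
    have hxn := hxle t hQ
    have h1 : 0 ≤ kcf / (‖x t‖ ^ 2 * ‖v t‖ ^ 2) * ⟪x t, v t⟫ * ⟪x t, v t⟫ := by
      rw [mul_assoc]
      exact mul_nonneg (by positivity) (mul_self_nonneg _)
    have h2 := hEbound t ht hxn
    linarith
  have hSd_np : ∀ t, 0 ≤ t → ⟪x t, x t⟫ ≤ ⟪x 0, x 0⟫ →
      ⟪x t, v t⟫ ≤ -(dxmin * ‖x 0‖) →
      -(kcf / (‖x t‖ ^ 2 * ‖v t‖ ^ 2) * ⟪x t, v t⟫ * ⟪x t, v t⟫)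
        + ⟪cross (x t) (z t), b⟫ ≤ 0 := by
    intro t ht hQ hRle
    have hxn := hxle t hQ
    have hxpos : 0 < ‖x t‖ := norm_pos_iff.mpr (hxne t ht)
    have hvpos : 0 < ‖v t‖ := norm_pos_iff.mpr (hvne t ht)
    have hd1 : 0 < ‖x t‖ ^ 2 * ‖v t‖ ^ 2 := by positivity
    have hd2 : 0 < ‖x 0‖ ^ 2 * dxmax ^ 2 := by positivity
    have hfrac : kcf * (dxmin * ‖x 0‖) ^ 2 / (‖x 0‖ ^ 2 * dxmax ^ 2) ≤
        kcf * (⟪x t, v t⟫ * ⟪x t, v t⟫) / (‖x t‖ ^ 2 * ‖v t‖ ^ 2) := by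
      apply div_le_div₀ (mul_nonneg hkcf.le (mul_self_nonneg _)) ?_ hd1 ?_
      · have hsq : (dxmin * ‖x 0‖) ^ 2 ≤ ⟪x t, v t⟫ * ⟪x t, v t⟫ := by nlinarith [hhcr]
        exact mul_le_mul_of_nonneg_left hsq hkcf.le
      · exact mul_le_mul (pow_le_pow_left₀ (norm_nonneg _) hxn 2)
          (pow_le_pow_left₀ (norm_nonneg _) (hvmax t ht) 2) (by positivity) (by positivity)
    have hMle : ‖x 0‖ * zmax ≤ kcf * (dxmin * ‖x 0‖) ^ 2 / (‖x 0‖ ^ 2 * dxmax ^ 2) := by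
      rw [le_div_iff₀ hd2]
      nlinarith [mul_le_mul_of_nonneg_left hzb1' (sq_nonneg ‖x 0‖)]
    have h2 := hEbound t ht hxn
    have heq : kcf / (‖x t‖ ^ 2 * ‖v t‖ ^ 2) * ⟪x t, v t⟫ * ⟪x t, v t⟫ =
        kcf * (⟪x t, v t⟫ * ⟪x t, v t⟫) / (‖x t‖ ^ 2 * ‖v t‖ ^ 2) := by ring
    rw [heq]
    linarith
  have hMh : (‖x 0‖ * zmax) * (dxmin * ‖x 0‖) ≤
      dxmin ^ 2 / 2 * (-(⟪cross (x 0) (v 0), b⟫) / 2) := by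
    nlinarith [mul_le_mul_of_nonneg_left hzb3' hdxmin.le]
  obtain ⟨τ, hτpos, hτR, hτS⟩ :=
    aux_main (R := fun t => ⟪x t, v t⟫) (S := fun t => ⟪cross (x t) (v t), b⟫)
      (Q := fun t => ⟪x t, x t⟫)
      (Rd := fun t => ‖v t‖ ^ 2 + kcf / (‖x t‖ ^ 2 * ‖v t‖ ^ 2) * ⟪x t, v t⟫ *
        ⟪cross (x t) (v t), b⟫ + ⟪x t, z t⟫)
      (Sd := fun t => -(kcf / (‖x t‖ ^ 2 * ‖v t‖ ^ 2) * ⟪x t, v t⟫ * ⟪x t, v t⟫)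
        + ⟪cross (x t) (z t), b⟫)
      (ρ := dxmin ^ 2 / 2) (M := ‖x 0‖ * zmax) (hcr := dxmin * ‖x 0‖)
      hρ hM hMρ hhcr hR' hS' hQ' hRd_lb hSd_ub hSd_np hR0 hS0 hMh
  refine ⟨τ, hτpos, hτR, ?_⟩
  intro t ht
  have hSt : ⟪cross (x t) (v t), b⟫ ≤ ⟪cross (x 0) (v 0), b⟫ / 2 := hτS t ht
  have ha := abs_real_inner_le_norm (cross (x t) (v t)) b
  rw [hb, mul_one] at ha
  have hc : ‖cross (x t) (v t)‖ ≤ ‖x t‖ * ‖v t‖ := cross_norm_le _ _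
  have h2 : ‖x t‖ * ‖v t‖ ≤ ‖x t‖ * dxmax :=
    mul_le_mul_of_nonneg_left (hvmax t ht.1) (norm_nonneg _)
  have h3 := (abs_le.mp ha).1
  rw [div_le_iff₀ (by positivity : (0:ℝ) < 2 * dxmax)]
  nlinarith [norm_nonneg (x t)]
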